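/- Let d ≥ 1. For three pairwise distinct points i, j, k ∈ ℤ^d define d₁(i,j,k) as the maximum, over the three points, of the ℓ¹ distance from that point to the two-element set of the remaining two points (where the ℓ¹ distance from a point p to a finite set T is min{ |p − q|₁ : q ∈ T }). Then there exists a constant C depending only on d such that for every finite set I ⊂ ℤ^d and every integer k₀ ≥ 1, the number of triples (i,j,k) ∈ I³ with i, j, k pairwise distinct and d₁(i,j,k) = k₀ is at most C · k₀^{2d−1} · #I. -/

import Mathlib

/-- The ℓ¹ distance between two points of `ℤ^d`. -/
def l1dist {d : ℕ} (p q : Fin d → ℤ) : ℤ := ∑ j, |p j - q j|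

/-- For pairwise distinct `i, j, k ∈ ℤ^d`, the maximum over the three points of the ℓ¹ distance
from that point to the set of the remaining two points. -/
def maxGap {d : ℕ} (i j k : Fin d → ℤ) : ℤ :=
  max (max (min (l1dist i j) (l1dist i k)) (min (l1dist j i) (l1dist j k)))
    (min (l1dist k i) (l1dist k j))

namespace Stmt12Aux

lemma l1dist_comm {d : ℕ} (p q : Fin d → ℤ) : l1dist p q = l1dist q p := by
  unfold l1dist; exact Finset.sum_congr rfl fun j _ => abs_sub_comm _ _

lemma l1dist_triangle {d : ℕ} (p q r : Fin d → ℤ) :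
    l1dist p r ≤ l1dist p q + l1dist q r := by
  unfold l1dist
  rw [← Finset.sum_add_distrib]
  exact Finset.sum_le_sum fun j _ => abs_sub_le _ _ _

/-- the ℓ∞-ball as a Finset (contains the ℓ¹ ball). -/
noncomputable def ballZ (d : ℕ) (R : ℤ) : Finset (Fin d → ℤ) :=
  Fintype.piFinset fun _ => Finset.Icc (-R) R

lemma mem_ballZ {d : ℕ} {R : ℤ} {z : Fin d → ℤ} (h : ∑ j, |z j| ≤ R) : z ∈ ballZ d R := by
  rw [ballZ, Fintype.mem_piFinset]
  intro j
  rw [Finset.mem_Icc, ← abs_le]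
  exact le_trans (Finset.single_le_sum (fun i _ => abs_nonneg (z i)) (Finset.mem_univ j)) h

lemma card_ballZ (d : ℕ) (R : ℤ) : (ballZ d R).card = (2 * R + 1).toNat ^ d := by
  rw [ballZ, Fintype.card_piFinset]
  simp [Int.card_Icc]
  congr 1
  ring_nf

noncomputable def sphereZ (d : ℕ) (R : ℤ) : Finset (Fin d → ℤ) :=
  (ballZ d R).filter fun z => ∑ j, |z j| = R

lemma mem_sphereZ {d : ℕ} {R : ℤ} {z : Fin d → ℤ} (h : ∑ j, |z j| = R) : z ∈ sphereZ d R := by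
  rw [sphereZ, Finset.mem_filter]
  exact ⟨mem_ballZ h.le, h⟩

lemma card_sphereZ (m : ℕ) (R : ℤ) :
    (sphereZ (m + 1) R).card ≤ 2 * (2 * R + 1).toNat ^ m := by
  have := Finset.card_le_card_of_injOn
    (s := sphereZ (m + 1) R)
    (t := (Fintype.piFinset fun _ : Fin m => Finset.Icc (-R) R) ×ˢ (Finset.univ : Finset Bool))
    (f := fun z => (Fin.init z, decide (0 ≤ z (Fin.last m)))) ?_ ?_
  · calc (sphereZ (m+1) R).card ≤ _ := this
      _ = 2 * (2 * R + 1).toNat ^ m := by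
        rw [Finset.card_product, Fintype.card_piFinset]
        simp [Int.card_Icc]
        rw [mul_comm]
        congr 1
        · congr 1; ring_nf
  · intro z hz
    rw [sphereZ, Finset.mem_coe, Finset.mem_filter, ballZ, Fintype.mem_piFinset] at hz
    rw [Finset.mem_coe, Finset.mem_product, Fintype.mem_piFinset]
    exact ⟨fun j => hz.1 _, Finset.mem_univ _⟩
  · intro z1 hz1 z2 hz2 heq
    rw [sphereZ, Finset.coe_filter, Set.mem_setOf_eq] at hz1 hz2
    have hsum1 := hz1.2
    have hsum2 := hz2.2
    have hinit : Fin.init z1 = Fin.init z2 := congrArg Prod.fst heq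
    have hbool : decide (0 ≤ z1 (Fin.last m)) = decide (0 ≤ z2 (Fin.last m)) :=
      congrArg Prod.snd heq
    have habs : |z1 (Fin.last m)| = |z2 (Fin.last m)| := by
      rw [Fin.sum_univ_castSucc] at hsum1 hsum2
      have : ∑ i : Fin m, |z1 i.castSucc| = ∑ i : Fin m, |z2 i.castSucc| := by
        refine Finset.sum_congr rfl fun i _ => ?_
        have := congrFun hinit i
        simp [Fin.init] at this
        rw [this]
      omega
    have hlast : z1 (Fin.last m) = z2 (Fin.last m) := by
      by_cases h1 : 0 ≤ z1 (Fin.last m)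
      · have h2 : 0 ≤ z2 (Fin.last m) := by
          by_contra h2
          simp [h1, h2] at hbool
        rwa [abs_of_nonneg h1, abs_of_nonneg h2] at habs
      · have h2 : ¬ 0 ≤ z2 (Fin.last m) := by
          by_contra h2
          simp [h1, h2] at hbool
        push_neg at h1 h2
        rw [abs_of_neg h1, abs_of_neg h2] at habs
        omega
    funext i
    rcases Fin.eq_castSucc_or_eq_last i with ⟨j, rfl⟩ | rfl
    · have := congrFun hinit j
      simpa [Fin.init] using this
    · exact hlast

/-- Generic counting lemma: if a set of triples injects (via anchor + two offsets) into
`I × S × B`, its cardinality is at most `#I * #S * #B`, and it is finite. -/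
lemma count_aux {d : ℕ} (I : Set (Fin d → ℤ)) (hI : I.Finite)
    (S B : Finset (Fin d → ℤ))
    (A : Set ((Fin d → ℤ) × (Fin d → ℤ) × (Fin d → ℤ)))
    (a b c : ((Fin d → ℤ) × (Fin d → ℤ) × (Fin d → ℤ)) → (Fin d → ℤ))
    (hinj : Function.Injective fun p => (a p, b p, c p))
    (hmem : ∀ p ∈ A, a p ∈ I ∧ b p - a p ∈ S ∧ c p - a p ∈ B) :
    A.Finite ∧ (A.ncard : ℝ) ≤ (I.ncard : ℝ) * S.card * B.card := by
  set f : ((Fin d → ℤ) × (Fin d → ℤ) × (Fin d → ℤ)) →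
      ((Fin d → ℤ) × (Fin d → ℤ) × (Fin d → ℤ)) :=
    fun p => (a p, b p - a p, c p - a p) with hf
  have hfinj : Function.Injective f := by
    intro p q h
    have h1 : a p = a q := congrArg Prod.fst h
    have h2 : b p - a p = b q - a q := congrArg (fun x => x.2.1) h
    have h3 : c p - a p = c q - a q := congrArg (fun x => x.2.2) h
    have hb : b p = b q := by
      have : b p - a p + a p = b q - a q + a q := by rw [h2, h1]
      rwa [sub_add_cancel, sub_add_cancel] at this
    have hc : c p = c q := by
      have : c p - a p + a p = c q - a q + a q := by rw [h3, h1]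
      rwa [sub_add_cancel, sub_add_cancel] at this
    apply hinj
    simp only [Prod.mk.injEq]
    exact ⟨h1, hb, hc⟩
  set T : Set ((Fin d → ℤ) × (Fin d → ℤ) × (Fin d → ℤ)) :=
    ↑(hI.toFinset ×ˢ S ×ˢ B) with hT
  have hmapsto : ∀ p ∈ A, f p ∈ T := by
    intro p hp
    obtain ⟨h1, h2, h3⟩ := hmem p hp
    rw [hT, Finset.mem_coe, Finset.mem_product, Finset.mem_product]
    exact ⟨hI.mem_toFinset.mpr h1, h2, h3⟩
  have hTfin : T.Finite := (hI.toFinset ×ˢ S ×ˢ B).finite_toSet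
  have hAfin : A.Finite := by
    have : A ⊆ f ⁻¹' T := hmapsto
    exact Set.Finite.subset (hTfin.preimage (hfinj.injOn)) this
  refine ⟨hAfin, ?_⟩
  have hle : A.ncard ≤ T.ncard := Set.ncard_le_ncard_of_injOn f hmapsto hfinj.injOn hTfin
  have hTcard : T.ncard = I.ncard * S.card * B.card := by
    rw [hT, Set.ncard_coe_finset, Finset.card_product, Finset.card_product,
      Set.ncard_eq_toFinset_card _ hI, mul_assoc]
  rw [hTcard] at hle
  exact_mod_cast hle

end Stmt12Aux

open Stmt12Aux in
/-- Counting bound: there is `C` (depending only on `d`) such that for every finite `I ⊆ ℤ^d`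
and every `k₀ ≥ 1`, the number of pairwise-distinct triples from `I` with maximal gap exactly
`k₀` is at most `C k₀^{2d−1} #I`. -/
theorem stmt12 (d : ℕ) (hd : 1 ≤ d) :
    ∃ C : ℝ, 0 < C ∧ ∀ I : Set (Fin d → ℤ), I.Finite → ∀ k₀ : ℕ, 1 ≤ k₀ →
      ({p : (Fin d → ℤ) × (Fin d → ℤ) × (Fin d → ℤ) |
          p.1 ∈ I ∧ p.2.1 ∈ I ∧ p.2.2 ∈ I ∧
          p.1 ≠ p.2.1 ∧ p.1 ≠ p.2.2 ∧ p.2.1 ≠ p.2.2 ∧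
          maxGap p.1 p.2.1 p.2.2 = (k₀ : ℤ)}.ncard : ℝ) ≤
        C * (k₀ : ℝ) ^ (2 * d - 1) * (I.ncard : ℝ) := by
  obtain ⟨m, rfl⟩ : ∃ m, d = m + 1 := ⟨d - 1, (Nat.succ_pred_eq_of_pos hd).symm⟩
  refine ⟨6 * 3 ^ m * 5 ^ (m+1), by positivity, ?_⟩
  intro I hI k₀ hk₀
  obtain ⟨r, hr⟩ : ∃ r : ℤ, r = (k₀ : ℤ) := ⟨_, rfl⟩
  have hr1 : (1 : ℤ) ≤ r := by rw [hr]; exact_mod_cast hk₀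
  -- the three covering sets
  set T : Set ((Fin (m+1) → ℤ) × (Fin (m+1) → ℤ) × (Fin (m+1) → ℤ)) :=
    {p | p.1 ∈ I ∧ p.2.1 ∈ I ∧ p.2.2 ∈ I ∧
        p.1 ≠ p.2.1 ∧ p.1 ≠ p.2.2 ∧ p.2.1 ≠ p.2.2 ∧
        maxGap p.1 p.2.1 p.2.2 = (k₀ : ℤ)} with hT
  set S : Finset (Fin (m+1) → ℤ) := sphereZ (m+1) r with hS
  set B : Finset (Fin (m+1) → ℤ) := ballZ (m+1) (2 * r) with hB
  set A₁ : Set ((Fin (m+1) → ℤ) × (Fin (m+1) → ℤ) × (Fin (m+1) → ℤ)) :=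
    {p | p.1 ∈ I ∧ p.2.1 - p.1 ∈ S ∧ p.2.2 - p.1 ∈ B} with hA₁
  set A₂ : Set ((Fin (m+1) → ℤ) × (Fin (m+1) → ℤ) × (Fin (m+1) → ℤ)) :=
    {p | p.1 ∈ I ∧ p.2.2 - p.1 ∈ S ∧ p.2.1 - p.1 ∈ B} with hA₂
  set A₃ : Set ((Fin (m+1) → ℤ) × (Fin (m+1) → ℤ) × (Fin (m+1) → ℤ)) :=
    {p | p.2.1 ∈ I ∧ p.2.2 - p.2.1 ∈ S ∧ p.1 - p.2.1 ∈ B} with hA₃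
  have hl1 : ∀ p q : Fin (m+1) → ℤ, (∑ j, |(p - q) j|) = l1dist p q := by
    intro p q; unfold l1dist; simp
  have hmemS : ∀ p q : Fin (m+1) → ℤ, l1dist p q = r → p - q ∈ S := by
    intro p q h; exact mem_sphereZ (by rw [hl1]; exact h)
  have hmemB : ∀ p q : Fin (m+1) → ℤ, l1dist p q ≤ 2 * r → p - q ∈ B := by
    intro p q h; exact mem_ballZ (by rw [hl1]; exact h)
  have hcover : T ⊆ A₁ ∪ A₂ ∪ A₃ := by
    rintro ⟨i, j, k⟩ ⟨hi, hj, hk, _, _, _, hgap⟩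
    rw [← hr] at hgap
    rw [maxGap] at hgap
    -- all three mins are ≤ r, and one of the pairwise distances equals r
    have h1 : min (l1dist i j) (l1dist i k) ≤ r := by
      rw [← hgap]; exact le_max_of_le_left (le_max_left _ _)
    have h2 : min (l1dist j i) (l1dist j k) ≤ r := by
      rw [← hgap]; exact le_max_of_le_left (le_max_right _ _)
    have h3 : min (l1dist k i) (l1dist k j) ≤ r := by
      rw [← hgap]; exact le_max_right _ _
    have hone : l1dist i j = r ∨ l1dist i k = r ∨ l1dist j k = r := by
      rcases max_cases (max (min (l1dist i j) (l1dist i k))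
          (min (l1dist j i) (l1dist j k))) (min (l1dist k i) (l1dist k j)) with ⟨he, _⟩ | ⟨he, _⟩
      · rw [he] at hgap
        rcases max_cases (min (l1dist i j) (l1dist i k))
            (min (l1dist j i) (l1dist j k)) with ⟨he2, _⟩ | ⟨he2, _⟩
        · rw [he2] at hgap
          rcases min_cases (l1dist i j) (l1dist i k) with ⟨he3, _⟩ | ⟨he3, _⟩ <;>
            rw [he3] at hgap
          · exact Or.inl hgap
          · exact Or.inr (Or.inl hgap)
        · rw [he2] at hgap
          rcases min_cases (l1dist j i) (l1dist j k) with ⟨he3, _⟩ | ⟨he3, _⟩ <;>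
            rw [he3] at hgap
          · exact Or.inl ((l1dist_comm i j).trans hgap)
          · exact Or.inr (Or.inr hgap)
      · rw [he] at hgap
        rcases min_cases (l1dist k i) (l1dist k j) with ⟨he3, _⟩ | ⟨he3, _⟩ <;>
          rw [he3] at hgap
        · exact Or.inr (Or.inl ((l1dist_comm i k).trans hgap))
        · exact Or.inr (Or.inr ((l1dist_comm j k).trans hgap))
    rcases hone with hij | hik | hjk
    · -- A₁ : anchor i, j on sphere, k in ball
      left; left
      refine ⟨hi, hmemS _ _ ((l1dist_comm j i).trans hij), hmemB _ _ ?_⟩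
      rcases min_le_iff.mp h3 with h | h
      · calc l1dist k i ≤ r := h
          _ ≤ 2 * r := by omega
      · calc l1dist k i ≤ l1dist k j + l1dist j i := l1dist_triangle _ _ _
          _ ≤ r + r := add_le_add h (by rw [l1dist_comm]; exact hij.le)
          _ = 2 * r := by ring
    · -- A₂ : anchor i, k on sphere, j in ball
      left; right
      refine ⟨hi, hmemS _ _ ((l1dist_comm k i).trans hik), hmemB _ _ ?_⟩
      rcases min_le_iff.mp h2 with h | h
      · calc l1dist j i ≤ r := h
          _ ≤ 2 * r := by omega
      · calc l1dist j i ≤ l1dist j k + l1dist k i := l1dist_triangle _ _ _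
          _ ≤ r + r := add_le_add h (by rw [l1dist_comm]; exact hik.le)
          _ = 2 * r := by ring
    · -- A₃ : anchor j, k on sphere, i in ball
      right
      refine ⟨hj, hmemS _ _ ((l1dist_comm k j).trans hjk), hmemB _ _ ?_⟩
      rcases min_le_iff.mp h1 with h | h
      · calc l1dist i j ≤ r := h
          _ ≤ 2 * r := by omega
      · calc l1dist i j ≤ l1dist i k + l1dist k j := l1dist_triangle _ _ _
          _ ≤ r + r := add_le_add h (by rw [l1dist_comm]; exact hjk.le)
          _ = 2 * r := by ring
  -- cardinality bounds for the three sets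
  obtain ⟨hf1, hc1⟩ := count_aux I hI S B A₁ (fun p => p.1) (fun p => p.2.1) (fun p => p.2.2)
    (fun p q h => by
      simp only [Prod.mk.injEq] at h
      exact Prod.ext h.1 (Prod.ext h.2.1 h.2.2)) (fun p hp => hp)
  obtain ⟨hf2, hc2⟩ := count_aux I hI S B A₂ (fun p => p.1) (fun p => p.2.2) (fun p => p.2.1)
    (fun p q h => by
      simp only [Prod.mk.injEq] at h
      exact Prod.ext h.1 (Prod.ext h.2.2 h.2.1)) (fun p hp => hp)
  obtain ⟨hf3, hc3⟩ := count_aux I hI S B A₃ (fun p => p.2.1) (fun p => p.2.2) (fun p => p.1)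
    (fun p q h => by
      simp only [Prod.mk.injEq] at h
      exact Prod.ext h.2.2 (Prod.ext h.1 h.2.1)) (fun p hp => hp)
  have hTle : (T.ncard : ℝ) ≤ (A₁.ncard : ℝ) + A₂.ncard + A₃.ncard := by
    have h1 : T.ncard ≤ (A₁ ∪ A₂ ∪ A₃).ncard :=
      Set.ncard_le_ncard hcover ((hf1.union hf2).union hf3)
    have h2 : (A₁ ∪ A₂ ∪ A₃).ncard ≤ A₁.ncard + A₂.ncard + A₃.ncard :=
      le_trans (Set.ncard_union_le _ _) (by gcongr; exact Set.ncard_union_le _ _)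
    exact_mod_cast h1.trans h2
  -- numeric bounds on S and B
  have hScard : (S.card : ℝ) ≤ 2 * (3 * (k₀ : ℝ)) ^ m := by
    have h1 : S.card ≤ 2 * (2 * r + 1).toNat ^ m := card_sphereZ m r
    have h2 : ((2 * r + 1).toNat : ℝ) ≤ 3 * (k₀ : ℝ) := by
      have : (2 * r + 1).toNat = 2 * k₀ + 1 := by omega
      rw [this]; push_cast; have : (1:ℝ) ≤ (k₀:ℝ) := by exact_mod_cast hk₀
      linarith
    calc (S.card : ℝ) ≤ 2 * ((2 * r + 1).toNat : ℝ) ^ m := by exact_mod_cast h1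
      _ ≤ 2 * (3 * (k₀ : ℝ)) ^ m := by gcongr
  have hBcard : (B.card : ℝ) ≤ (5 * (k₀ : ℝ)) ^ (m+1) := by
    have h1 : B.card = (2 * (2 * r) + 1).toNat ^ (m+1) := card_ballZ (m+1) (2 * r)
    have h2 : ((2 * (2 * r) + 1).toNat : ℝ) ≤ 5 * (k₀ : ℝ) := by
      have : (2 * (2 * r) + 1).toNat = 4 * k₀ + 1 := by omega
      rw [this]; push_cast; have : (1:ℝ) ≤ (k₀:ℝ) := by exact_mod_cast hk₀
      linarith
    calc (B.card : ℝ) = ((2 * (2 * r) + 1).toNat : ℝ) ^ (m+1) := by exact_mod_cast h1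
      _ ≤ (5 * (k₀ : ℝ)) ^ (m+1) := pow_le_pow_left₀ (Nat.cast_nonneg _) h2 _
  have hbound : ∀ (Acard : ℕ), (Acard : ℝ) ≤ (I.ncard : ℝ) * S.card * B.card →
      (Acard : ℝ) ≤ 2 * 3 ^ m * 5 ^ (m+1) * (k₀ : ℝ) ^ (2 * (m+1) - 1) * (I.ncard : ℝ) := by
    intro Acard h
    have hSB : (I.ncard : ℝ) * S.card * B.card ≤
        (I.ncard : ℝ) * (2 * (3 * (k₀ : ℝ)) ^ m) * ((5 * (k₀ : ℝ)) ^ (m+1)) :=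
      mul_le_mul (mul_le_mul_of_nonneg_left hScard (Nat.cast_nonneg _)) hBcard
        (Nat.cast_nonneg _) (by positivity)
    have heq : (I.ncard : ℝ) * (2 * (3 * (k₀ : ℝ)) ^ m) * ((5 * (k₀ : ℝ)) ^ (m+1)) =
        2 * 3 ^ m * 5 ^ (m+1) * (k₀ : ℝ) ^ (2 * (m+1) - 1) * (I.ncard : ℝ) := by
      have hexp : 2 * (m+1) - 1 = m + (m+1) := by omega
      rw [hexp, mul_pow, mul_pow, pow_add]
      ring
    linarith
  have hb1 := hbound _ hc1
  have hb2 := hbound _ hc2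
  have hb3 := hbound _ hc3
  calc (T.ncard : ℝ) ≤ (A₁.ncard : ℝ) + A₂.ncard + A₃.ncard := hTle
    _ ≤ 3 * (2 * 3 ^ m * 5 ^ (m+1) * (k₀ : ℝ) ^ (2 * (m+1) - 1) * (I.ncard : ℝ)) := by linarith
    _ = 6 * 3 ^ m * 5 ^ (m+1) * (k₀ : ℝ) ^ (2 * (m+1) - 1) * (I.ncard : ℝ) := by ring
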